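/- If C ⊆ 𝐒 is balanced and algebraically bounded, then the quadratic module QM(C^ς) ⊆ 𝒮 is archimedean: for every f ∈ 𝒮 there exists m > 0 such that m + f ∈ QM(C^ς) and m − f ∈ QM(C^ς). -/

import Mathlib

open scoped BigOperators Matrix Kronecker

namespace StatePoly

/-! ### Words and symmetrized words -/

/-- Words in the letters `x_1, …, x_n`: the free monoid on `Fin n`. -/
abbrev Word (n : ℕ) := FreeMonoid (Fin n)

/-- The word reversal (the involution `⋆` on words). -/
def wordRev {n : ℕ} (w : Word n) : Word n := FreeMonoid.reverse w

/-- Two nonempty words are identified iff they are equal or reverses of each other;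
this realizes the relation `ς(w) = ς(w⋆)`. -/
def wordSetoid (n : ℕ) : Setoid {l : List (Fin n) // l ≠ []} where
  r u v := u.1 = v.1 ∨ u.1 = v.1.reverse
  iseqv := by
    constructor
    · intro u; exact Or.inl rfl
    · rintro u v (h | h)
      · exact Or.inl h.symm
      · right; rw [h, List.reverse_reverse]
    · rintro u v w (h1 | h1) (h2 | h2)
      · exact Or.inl (h1.trans h2)
      · right; rw [h1, h2]
      · right; rw [h1, h2]
      · left; rw [h1, h2, List.reverse_reverse]

/-- Symbols `ς(w)`, `w` a nonempty word, modulo `ς(w) = ς(w⋆)`. -/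
def SW (n : ℕ) := Quotient (wordSetoid n)

/-- The commutative algebra `𝒮` of state polynomials:
a polynomial ring in the symbols `ς(w)`. -/
abbrev SPoly (n : ℕ) := MvPolynomial (SW n) ℝ

/-- The algebra `𝐒 = 𝒮 ⊗ ℝ⟨x⟩` of nc state polynomials, realized as the monoid algebra
of the free monoid over the polynomial ring `𝒮`. -/
abbrev NCSPoly (n : ℕ) := MonoidAlgebra (SPoly n) (Word n)

variable {n : ℕ}

/-- The state symbol `ς(w)` of a word, with `ς(1) = 1`. -/
noncomputable def sigWordL (l : List (Fin n)) : SPoly n :=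
  if h : l = [] then 1 else MvPolynomial.X (Quotient.mk (wordSetoid n) ⟨l, h⟩)

/-- The unital `𝒮`-linear map `ς : 𝐒 → 𝒮`. -/
noncomputable def sig (f : NCSPoly n) : SPoly n :=
  Finsupp.sum f.coeff fun w c => c * sigWordL (FreeMonoid.toList w)

/-- The involution `⋆` on `𝐒`: it fixes `𝒮 ∪ {x_1, …, x_n}` pointwise and reverses words. -/
noncomputable def ncStar (f : NCSPoly n) : NCSPoly n :=
  MonoidAlgebra.ofCoeff (Finsupp.mapDomain wordRev f.coeff)

/-- The embedding `𝒮 ⊆ 𝐒`. -/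
noncomputable def iotaS (p : SPoly n) : NCSPoly n := MonoidAlgebra.single 1 p

/-- The variable `x_i` as an nc state polynomial. -/
noncomputable def ncX (i : Fin n) : NCSPoly n := MonoidAlgebra.single (FreeMonoid.of i) 1

/-- A real constant as an nc state polynomial. -/
noncomputable def ncConst (r : ℝ) : NCSPoly n := iotaS (MvPolynomial.C r)

/-- `f ∈ 𝐒` lies in the free algebra `ℝ⟨x⟩ ⊆ 𝐒` iff all its coefficients are real constants. -/
def IsFreePoly (f : NCSPoly n) : Prop := ∀ w : Word n, ∃ r : ℝ, f.coeff w = MvPolynomial.C r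

/-! ### Degrees -/

/-- `|w|` on symmetrized words. -/
def swDeg : SW n → ℕ :=
  Quotient.lift (fun l : {l : List (Fin n) // l ≠ []} => l.1.length)
    (by rintro u v (h | h) <;> simp [h])

/-- The degree of a monomial `∏ ς(u_j)^{e_j}`, namely `∑ e_j |u_j|`. -/
def monoWeight (m : SW n →₀ ℕ) : ℕ := m.sum fun q e => e * swDeg q

/-- The degree of a state polynomial. -/
noncomputable def sDeg (p : SPoly n) : ℕ := p.support.sup monoWeight

/-- The degree of an nc state polynomial: the maximum over the `𝐒`-words appearing in it of
`deg ς(u_1)⋯ς(u_m)v = |v| + ∑_j |u_j|`. -/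
noncomputable def ncDeg (f : NCSPoly n) : ℕ :=
  (Finsupp.support f.coeff).sup fun w => sDeg (f.coeff w) + (FreeMonoid.toList w).length

lemma sDeg_zero : sDeg (0 : SPoly n) = 0 := by
  simp [sDeg, MvPolynomial.support_zero]

lemma sDeg_add_le (p q : SPoly n) : sDeg (p + q) ≤ max (sDeg p) (sDeg q) := by
  classical
  refine Finset.sup_le fun m hm => ?_
  rcases Finset.mem_union.mp (MvPolynomial.support_add hm) with h | h
  · exact le_max_of_le_left (Finset.le_sup h)
  · exact le_max_of_le_right (Finset.le_sup h)

lemma sDeg_smul_le (c : ℝ) (p : SPoly n) : sDeg (c • p) ≤ sDeg p :=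
  Finset.sup_le fun _m hm => Finset.le_sup (MvPolynomial.support_smul hm)

lemma sDeg_one : sDeg (1 : SPoly n) = 0 := by
  classical
  refine le_antisymm (Finset.sup_le fun m hm => ?_) (Nat.zero_le _)
  have : m = 0 := by
    by_contra h
    have := MvPolynomial.mem_support_iff.mp hm
    rw [MvPolynomial.coeff_one, if_neg (fun he => h he.symm)] at this
    exact this rfl
  subst this
  simp [monoWeight]

/-- The subspace `𝒮_{k}` of state polynomials of degree at most `k`. -/
noncomputable def SPolyLe (n k : ℕ) : Submodule ℝ (SPoly n) where
  carrier := {p | sDeg p ≤ k}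
  add_mem' := fun {p q} hp hq =>
    le_trans (sDeg_add_le p q) (max_le hp hq)
  zero_mem' := by simp [Set.mem_setOf_eq, sDeg_zero]
  smul_mem' := fun c p hp => le_trans (sDeg_smul_le c p) hp

lemma one_mem_SPolyLe (k : ℕ) : (1 : SPoly n) ∈ SPolyLe n k := by
  show sDeg (1 : SPoly n) ≤ k
  simp [sDeg_one]

/-- Extension by zero of a linear functional on `𝒮_{k}` to `𝒮`
(used to refer to values of truncated functionals). -/
noncomputable def lext {n k : ℕ} (L : SPolyLe n k →ₗ[ℝ] ℝ) (p : SPoly n) : ℝ :=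
  if h : sDeg p ≤ k then L ⟨p, h⟩ else 0

/-! ### Evaluations -/

section Eval

variable {A : Type*} [Ring A] [Module ℝ A]

/-- Evaluation of a word at a tuple `X`. -/
noncomputable def wEvalL (X : Fin n → A) (l : List (Fin n)) : A := (l.map X).prod

/-- The value assigned to the symbol `ς(w)`: `λ(w(X))`. -/
noncomputable def stVal (lam : A → ℝ) (X : Fin n → A) (q : SW n) : ℝ :=
  lam (wEvalL X (Quotient.out q).1)

/-- Evaluation `a(λ; X) ∈ ℝ` of a state polynomial. -/
noncomputable def sEval (lam : A → ℝ) (X : Fin n → A) (p : SPoly n) : ℝ :=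
  MvPolynomial.eval (stVal lam X) p

/-- Evaluation `f(λ; X) ∈ A` of an nc state polynomial. -/
noncomputable def ncEval (lam : A → ℝ) (X : Fin n → A) (f : NCSPoly n) : A :=
  Finsupp.sum f.coeff fun w c => sEval lam X c • wEvalL X (FreeMonoid.toList w)

end Eval

/-! ### States on matrix algebras -/

/-- A density matrix: positive semidefinite with trace 1. -/
def IsDensity {k : ℕ} (ρ : Matrix (Fin k) (Fin k) ℝ) : Prop :=
  ρ.PosSemidef ∧ ρ.trace = 1

/-- The state on `k×k` matrices induced by a density matrix. -/
noncomputable def matState {k : ℕ} (ρ : Matrix (Fin k) (Fin k) ℝ) :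
    Matrix (Fin k) (Fin k) ℝ → ℝ := fun Y => (ρ * Y).trace

/-- The vector state on `k×k` matrices induced by a vector `ψ`. -/
noncomputable def vecStateM {k : ℕ} (ψ : Fin k → ℝ) :
    Matrix (Fin k) (Fin k) ℝ → ℝ := fun Y => ψ ⬝ᵥ Y.mulVec ψ

/-! ### States on B(H) -/

section Op

variable (H : Type*) [NormedAddCommGroup H] [InnerProductSpace ℝ H] [CompleteSpace H]

/-- A state on `B(H)`: a unital positive `⋆`-linear functional. -/
def IsState (lam : (H →L[ℝ] H) →ₗ[ℝ] ℝ) : Prop :=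
  lam 1 = 1 ∧ (∀ Y : H →L[ℝ] H, lam (ContinuousLinearMap.adjoint Y) = lam Y) ∧
    ∀ Y : H →L[ℝ] H, 0 ≤ lam (Y * ContinuousLinearMap.adjoint Y)

/-- A vector state on `B(H)`. -/
def IsVecState (lam : (H →L[ℝ] H) →ₗ[ℝ] ℝ) : Prop :=
  ∃ v : H, ‖v‖ = 1 ∧ ∀ Y : H →L[ℝ] H, lam Y = inner ℝ (Y v) v

/-- The state semialgebraic set `𝒟_C^∞` determined by the constraint set `C ⊆ 𝐒`. -/
def DCinf (C : Set (NCSPoly n)) :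
    Set ((((H →L[ℝ] H) →ₗ[ℝ] ℝ)) × (Fin n → (H →L[ℝ] H))) :=
  {p | IsState H p.1 ∧ (∀ i, ContinuousLinearMap.adjoint (p.2 i) = p.2 i) ∧
    ∀ c ∈ C, (ncEval (⇑p.1) p.2 c).IsPositive}

/-- The subset `vec-𝒟_C^∞` of `𝒟_C^∞` in which the state is a vector state. -/
def vecDCinf (C : Set (NCSPoly n)) :
    Set ((((H →L[ℝ] H) →ₗ[ℝ] ℝ)) × (Fin n → (H →L[ℝ] H))) :=
  {p ∈ DCinf H C | IsVecState H p.1}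

end Op

/-! ### Positivity structures -/

/-- `Ω`: sums of products of elements `ς(h h⋆)`, `h ∈ 𝐒`. -/
def Omega (n : ℕ) : Set (SPoly n) :=
  {x | ∃ (m : ℕ) (g : Fin m → SPoly n),
    (∀ i, ∃ (mi : ℕ) (h : Fin mi → NCSPoly n), g i = ∏ j, sig (h j * ncStar (h j))) ∧
    x = ∑ i, g i}

/-- Membership in the smallest subset of `𝒮` containing `{1} ∪ S` that is closed under
addition and under multiplication by squares of elements of `A`. -/
inductive QMemIn (A S : Set (SPoly n)) : SPoly n → Prop
  | base {s : SPoly n} : s ∈ insert (1 : SPoly n) S → QMemIn A S s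
  | add {p q : SPoly n} : QMemIn A S p → QMemIn A S q → QMemIn A S (p + q)
  | mul_sq {a p : SPoly n} : a ∈ A → QMemIn A S p → QMemIn A S (a ^ 2 * p)

/-- The quadratic module generated by `S` in `𝒮`. -/
def QM (S : Set (SPoly n)) : Set (SPoly n) := {x | QMemIn Set.univ S x}

/-- The set `C^ς = {ς(p c p⋆) : p ∈ ℝ⟨x⟩, c ∈ {1} ∪ C}`. -/
def Csig (C : Set (NCSPoly n)) : Set (SPoly n) :=
  {x | ∃ p : NCSPoly n, IsFreePoly p ∧ ∃ c ∈ insert (1 : NCSPoly n) C,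
    x = sig (p * c * ncStar p)}

/-- A balanced constraint set: closed under `⋆`, and non-symmetric elements come in `±` pairs. -/
def Balanced (C : Set (NCSPoly n)) : Prop :=
  (∀ c ∈ C, ncStar c ∈ C) ∧ ∀ c ∈ C, c ≠ ncStar c → -c ∈ C

/-- An algebraically bounded constraint set: `N - x_1^2 - ⋯ - x_n^2 = ∑ p_i c_i p_i⋆` with
`c_i ∈ {1} ∪ C ∩ ℝ⟨x⟩` and `p_i ∈ ℝ⟨x⟩`. -/
def AlgBounded (C : Set (NCSPoly n)) : Prop :=
  ∃ N : ℝ, 0 < N ∧ ∃ (m : ℕ) (p c : Fin m → NCSPoly n),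
    (∀ i, IsFreePoly (p i)) ∧
    (∀ i, c i = 1 ∨ (c i ∈ C ∧ IsFreePoly (c i))) ∧
    ncConst N - ∑ j : Fin n, ncX j ^ 2 = ∑ i, p i * c i * ncStar (p i)

/-- The truncated quadratic module `M(C)_d`. -/
def MCd (C : Set (NCSPoly n)) (d : ℕ) : Set (SPoly n) :=
  {x | ∃ (K : ℕ) (f c : Fin K → NCSPoly n),
    (∀ i, c i ∈ insert (1 : NCSPoly n) C) ∧
    (∀ i, ncDeg (f i * c i * ncStar (f i)) ≤ 2 * d) ∧
    x = ∑ i, sig (f i * c i * ncStar (f i))}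

end StatePoly

namespace StatePoly

section Arch

variable {n : ℕ}

open MvPolynomial

/-! #### Quadratic module basics -/

lemma QM_base {S : Set (SPoly n)} {s : SPoly n} (h : s ∈ S) : s ∈ QM S :=
  QMemIn.base (Set.mem_insert_of_mem _ h)

lemma QM_one {S : Set (SPoly n)} : (1 : SPoly n) ∈ QM S :=
  QMemIn.base (Set.mem_insert _ _)

lemma QM_add {S : Set (SPoly n)} {p q : SPoly n} (hp : p ∈ QM S) (hq : q ∈ QM S) :
    p + q ∈ QM S := QMemIn.add hp hq

lemma QM_mul_sq {S : Set (SPoly n)} (a : SPoly n) {p : SPoly n} (hp : p ∈ QM S) :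
    a ^ 2 * p ∈ QM S := QMemIn.mul_sq (Set.mem_univ a) hp

lemma QM_zero {S : Set (SPoly n)} : (0 : SPoly n) ∈ QM S := by
  have := QM_mul_sq (S := S) 0 QM_one
  simpa using this

lemma QM_sum {S : Set (SPoly n)} {ι : Type*} (s : Finset ι) (f : ι → SPoly n)
    (h : ∀ i ∈ s, f i ∈ QM S) : ∑ i ∈ s, f i ∈ QM S := by
  classical
  induction s using Finset.induction_on with
  | empty => simpa using (QM_zero (S := S))
  | insert _ _ hx ih =>
    rw [Finset.sum_insert hx]
    exact QM_add (h _ (Finset.mem_insert_self _ _))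
      (ih fun i hi => h i (Finset.mem_insert_of_mem hi))

lemma QM_smul {S : Set (SPoly n)} {r : ℝ} (hr : 0 ≤ r) {p : SPoly n} (hp : p ∈ QM S) :
    C r * p ∈ QM S := by
  have h : (C (Real.sqrt r) : SPoly n) ^ 2 * p = C r * p := by
    rw [← map_pow, Real.sq_sqrt hr]
  rw [← h]
  exact QM_mul_sq _ hp

lemma QM_const {S : Set (SPoly n)} {r : ℝ} (hr : 0 ≤ r) : (C r : SPoly n) ∈ QM S := by
  simpa using QM_smul (S := S) hr QM_one

lemma QM_sq {S : Set (SPoly n)} (a : SPoly n) : a ^ 2 ∈ QM S := by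
  simpa using QM_mul_sq (S := S) a QM_one

/-! #### Bounded elements -/

/-- The set of elements bounded with respect to the quadratic module generated by `S`. -/
def Bnd (S : Set (SPoly n)) : Set (SPoly n) :=
  {f | ∃ m : ℝ, 0 < m ∧ C m + f ∈ QM S ∧ C m - f ∈ QM S}

lemma Bnd_const {S : Set (SPoly n)} (r : ℝ) : (C r : SPoly n) ∈ Bnd S := by
  refine ⟨|r| + 1, by positivity, ?_, ?_⟩
  · rw [← map_add]
    exact QM_const (by cases abs_cases r <;> linarith)
  · rw [← map_sub]
    exact QM_const (by cases abs_cases r <;> linarith)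

lemma Bnd_neg {S : Set (SPoly n)} {f : SPoly n} (hf : f ∈ Bnd S) : -f ∈ Bnd S := by
  obtain ⟨m, hm, h1, h2⟩ := hf
  exact ⟨m, hm, by rwa [← sub_eq_add_neg], by rwa [sub_neg_eq_add]⟩

lemma Bnd_add {S : Set (SPoly n)} {f g : SPoly n} (hf : f ∈ Bnd S) (hg : g ∈ Bnd S) :
    f + g ∈ Bnd S := by
  obtain ⟨m, hm, h1, h2⟩ := hf
  obtain ⟨k, hk, h3, h4⟩ := hg
  refine ⟨m + k, by linarith, ?_, ?_⟩
  · have := QM_add h1 h3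
    rwa [show C m + f + (C k + g) = C (m + k) + (f + g) by rw [map_add]; ring] at this
  · have := QM_add h2 h4
    rwa [show C m - f + (C k - g) = C (m + k) - (f + g) by rw [map_add]; ring] at this

lemma Bnd_Cmul {S : Set (SPoly n)} (r : ℝ) {f : SPoly n} (hf : f ∈ Bnd S) :
    C r * f ∈ Bnd S := by
  have hnn : ∀ c : ℝ, 0 ≤ c → ∀ g : SPoly n, g ∈ Bnd S → C c * g ∈ Bnd S := by
    intro c hc g hg
    obtain ⟨m, hm, h1, h2⟩ := hg
    refine ⟨c * m + 1, by positivity, ?_, ?_⟩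
    · have := QM_add (QM_smul hc h1) (QM_one (S := S))
      rwa [show C c * (C m + g) + 1 = C (c * m + 1) + C c * g by
        rw [map_add, map_mul, map_one]; ring] at this
    · have := QM_add (QM_smul hc h2) (QM_one (S := S))
      rwa [show C c * (C m - g) + 1 = C (c * m + 1) - C c * g by
        rw [map_add, map_mul, map_one]; ring] at this
  rcases le_or_gt 0 r with hr | hr
  · exact hnn r hr f hf
  · have := hnn (-r) (by linarith) (-f) (Bnd_neg hf)
    rwa [map_neg, neg_mul_neg] at this

lemma Bnd_sq {S : Set (SPoly n)} {f : SPoly n} (hf : f ∈ Bnd S) : f ^ 2 ∈ Bnd S := by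
  obtain ⟨m, hm, h1, h2⟩ := hf
  refine ⟨m ^ 2 + 1, by positivity, ?_, ?_⟩
  · have := QM_add (QM_const (S := S) (r := m ^ 2 + 1) (by positivity)) (QM_sq f)
    exact this
  · -- upper bound on f^2
    have h3 : (C m + f) ^ 2 * (C m - f) ∈ QM S := QM_mul_sq _ h2
    have h4 : (C m - f) ^ 2 * (C m + f) ∈ QM S := QM_mul_sq _ h1
    have h5 := QM_add h3 h4
    have h6 := QM_smul (S := S) (r := 1 / (2 * m)) (by positivity) h5
    have heq : C (1 / (2 * m)) * ((C m + f) ^ 2 * (C m - f) + (C m - f) ^ 2 * (C m + f))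
        = C (m ^ 2) - f ^ 2 := by
      have e1 : ((C m + f) ^ 2 * (C m - f) + (C m - f) ^ 2 * (C m + f))
          = C (2 * m) * (C (m ^ 2) - f ^ 2) := by
        rw [map_mul, map_pow]
        have : (C (2 : ℝ) : SPoly n) = 2 := by
          rw [show (2:ℝ) = 1 + 1 by norm_num, map_add, map_one]; norm_num
        rw [this]; ring
      rw [e1, ← mul_assoc, ← map_mul, one_div, inv_mul_cancel₀ (by positivity), map_one, one_mul]
    rw [heq] at h6
    have := QM_add h6 (QM_one (S := S))
    rwa [show C (m ^ 2) - f ^ 2 + 1 = C (m ^ 2 + 1) - f ^ 2 by rw [map_add, map_one]; ring]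
      at this

lemma Bnd_mul {S : Set (SPoly n)} {f g : SPoly n} (hf : f ∈ Bnd S) (hg : g ∈ Bnd S) :
    f * g ∈ Bnd S := by
  have h1 : (f + g) ^ 2 + -(f ^ 2) + -(g ^ 2) ∈ Bnd S :=
    Bnd_add (Bnd_add (Bnd_sq (Bnd_add hf hg)) (Bnd_neg (Bnd_sq hf))) (Bnd_neg (Bnd_sq hg))
  have h2 := Bnd_Cmul (1 / 2 : ℝ) h1
  have heq : (C (1 / 2 : ℝ) : SPoly n) * ((f + g) ^ 2 + -(f ^ 2) + -(g ^ 2)) = f * g := by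
    have e1 : ((f + g) ^ 2 + -(f ^ 2) + -(g ^ 2)) = (f * g) + (f * g) := by ring
    rw [e1, mul_add, ← add_mul, ← map_add]
    norm_num
  rwa [heq] at h2

end Arch

end StatePoly
namespace StatePoly

section Arch2

variable {n : ℕ}

open MvPolynomial

/-! #### `sig` and `ncStar` -/

lemma sig_single (w : Word n) (c : SPoly n) :
    sig (MonoidAlgebra.single w c : NCSPoly n) = c * sigWordL (FreeMonoid.toList w) := by
  unfold sig; rw [MonoidAlgebra.coeff_single]; exact Finsupp.sum_single_index (by simp)

lemma sig_zero : sig (0 : NCSPoly n) = 0 := by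
  unfold sig; rw [MonoidAlgebra.coeff_zero]; exact Finsupp.sum_zero_index

lemma sig_add (f g : NCSPoly n) : sig (f + g) = sig f + sig g := by
  unfold sig; rw [MonoidAlgebra.coeff_add]; exact Finsupp.sum_add_index' (fun _ => by simp) (fun _ b₁ b₂ => add_mul _ _ _)

/-- `sig` as an additive monoid homomorphism. -/
noncomputable def sigHom : NCSPoly n →+ SPoly n where
  toFun := sig
  map_zero' := sig_zero
  map_add' := sig_add

lemma ncStar_add (f g : NCSPoly n) : ncStar (f + g) = ncStar f + ncStar g := by
  unfold ncStar; rw [MonoidAlgebra.coeff_add, Finsupp.mapDomain_add, MonoidAlgebra.ofCoeff_add]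

lemma ncStar_zero : ncStar (0 : NCSPoly n) = 0 := by
  unfold ncStar; rw [MonoidAlgebra.coeff_zero, Finsupp.mapDomain_zero]; rfl

lemma ncStar_single (w : Word n) (c : SPoly n) :
    ncStar (MonoidAlgebra.single w c : NCSPoly n) = MonoidAlgebra.single (wordRev w) c := by
  unfold ncStar; rw [MonoidAlgebra.coeff_single, Finsupp.mapDomain_single]; rfl

lemma ncStar_mul (f g : NCSPoly n) : ncStar (f * g) = ncStar g * ncStar f := by
  induction f using MonoidAlgebra.induction_linear with
  | zero => rw [zero_mul, ncStar_zero, mul_zero]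
  | add f1 f2 h1 h2 => rw [add_mul, ncStar_add, h1, h2, ncStar_add, mul_add]
  | single a b =>
    induction g using MonoidAlgebra.induction_linear with
    | zero => rw [mul_zero, ncStar_zero, zero_mul]
    | add g1 g2 h1 h2 => rw [mul_add, ncStar_add, h1, h2, ncStar_add, add_mul]
    | single a' b' =>
      show ncStar (MonoidAlgebra.single a b * MonoidAlgebra.single a' b') = _
      rw [MonoidAlgebra.single_mul_single, ncStar_single, ncStar_single, ncStar_single,
        MonoidAlgebra.single_mul_single, mul_comm b b']
      congr 1
      exact FreeMonoid.reverse_mul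

lemma ncStar_one : ncStar (1 : NCSPoly n) = 1 := by
  rw [MonoidAlgebra.one_def, ncStar_single]
  congr 1

/-! #### Free polynomials -/

lemma IsFreePoly.mul {f g : NCSPoly n} (hf : IsFreePoly f) (hg : IsFreePoly g) :
    IsFreePoly (f * g) := by
  classical
  unfold IsFreePoly
  intro w
  have : (f * g).coeff w ∈ (MvPolynomial.C : ℝ →+* SPoly n).range := by
    rw [MonoidAlgebra.coeff_mul]
    refine Subring.sum_mem _ fun a _ => Subring.sum_mem _ fun b _ => ?_
    show (if a * b = w then f.coeff a * g.coeff b else 0) ∈ (MvPolynomial.C : ℝ →+* SPoly n).range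
    split
    · obtain ⟨r, hr⟩ := hf a
      obtain ⟨s, hs⟩ := hg b
      rw [hr, hs]
      exact Subring.mul_mem _ ⟨r, rfl⟩ ⟨s, rfl⟩
    · exact Subring.zero_mem _
  obtain ⟨r, hr⟩ := this
  exact ⟨r, hr.symm⟩

lemma IsFreePoly.add {f g : NCSPoly n} (hf : IsFreePoly f) (hg : IsFreePoly g) :
    IsFreePoly (f + g) := by
  unfold IsFreePoly
  intro w
  obtain ⟨r, hr⟩ := hf w
  obtain ⟨s, hs⟩ := hg w
  exact ⟨r + s, by rw [MonoidAlgebra.coeff_add, Finsupp.add_apply, hr, hs, map_add]⟩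

lemma IsFreePoly.sub {f g : NCSPoly n} (hf : IsFreePoly f) (hg : IsFreePoly g) :
    IsFreePoly (f - g) := by
  unfold IsFreePoly
  intro w
  obtain ⟨r, hr⟩ := hf w
  obtain ⟨s, hs⟩ := hg w
  exact ⟨r - s, by rw [MonoidAlgebra.coeff_sub, Finsupp.sub_apply, hr, hs, map_sub]⟩

lemma isFreePoly_single (w : Word n) (r : ℝ) :
    IsFreePoly (MonoidAlgebra.single w (C r) : NCSPoly n) := by
  classical
  unfold IsFreePoly
  intro w'
  by_cases h : w = w'
  · exact ⟨r, by rw [← h, MonoidAlgebra.coeff_single, Finsupp.single_eq_same]⟩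
  · exact ⟨0, by rw [MonoidAlgebra.coeff_single, Finsupp.single_eq_of_ne (Ne.symm h), map_zero]⟩

/-- The word `x_{l₁} ⋯ x_{l_k}` as an nc state polynomial. -/
noncomputable def Wl (l : List (Fin n)) : NCSPoly n :=
  MonoidAlgebra.single (FreeMonoid.ofList l) 1

lemma isFreePoly_Wl (l : List (Fin n)) : IsFreePoly (Wl l) := by
  have := isFreePoly_single (n := n) (FreeMonoid.ofList l) 1
  rwa [map_one] at this

lemma isFreePoly_one : IsFreePoly (1 : NCSPoly n) := by
  rw [MonoidAlgebra.one_def]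
  have := isFreePoly_single (n := n) 1 1
  rwa [map_one] at this

lemma Wl_mul (u v : List (Fin n)) : Wl u * Wl v = Wl (u ++ v) := by
  rw [Wl, Wl, Wl, MonoidAlgebra.single_mul_single, mul_one, FreeMonoid.ofList_append]

lemma ncStar_Wl (l : List (Fin n)) : ncStar (Wl l) = Wl l.reverse := by
  rw [Wl, ncStar_single]
  rfl

lemma sig_Wl (l : List (Fin n)) : sig (Wl l) = sigWordL l := by
  rw [Wl, sig_single, one_mul, FreeMonoid.toList_ofList]

lemma sigWordL_nil : sigWordL ([] : List (Fin n)) = 1 := dif_pos rfl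

lemma sigWordL_reverse (l : List (Fin n)) : sigWordL l.reverse = sigWordL l := by
  rcases eq_or_ne l [] with h | h
  · subst h; rfl
  · have h' : l.reverse ≠ [] := by simpa using h
    rw [sigWordL, sigWordL, dif_neg h', dif_neg h]
    congr 1
    exact Quotient.sound (Or.inr rfl)

/-! #### Membership of conjugated generators -/

lemma sig_conj_mem {C : Set (NCSPoly n)} {p c : NCSPoly n} (hp : IsFreePoly p)
    (hc : c ∈ insert (1 : NCSPoly n) C) : sig (p * c * ncStar p) ∈ QM (Csig C) :=
  QM_base ⟨p, hp, c, hc, rfl⟩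

lemma sq_word_mem {C : Set (NCSPoly n)} (u : List (Fin n)) :
    sigWordL (u ++ u.reverse) ∈ QM (Csig C) := by
  have h := sig_conj_mem (isFreePoly_Wl u) (Set.mem_insert 1 C)
  rwa [mul_one, ncStar_Wl, Wl_mul, sig_Wl] at h

/-- Conjugation by the word `u` followed by `sig`, as an additive homomorphism. -/
noncomputable def conjHom (u : List (Fin n)) : NCSPoly n →+ SPoly n where
  toFun f := sig (Wl u * f * Wl u.reverse)
  map_zero' := by show sig (Wl u * 0 * Wl u.reverse) = 0; rw [mul_zero, zero_mul, sig_zero]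
  map_add' f g := by
    show sig (Wl u * (f + g) * Wl u.reverse) = _
    rw [mul_add, add_mul, sig_add]

end Arch2

end StatePoly
namespace StatePoly

section Arch3

variable {n : ℕ}

open MvPolynomial

lemma conjHom_apply (u : List (Fin n)) (f : NCSPoly n) :
    conjHom u f = sig (Wl u * f * Wl u.reverse) := rfl

lemma sig_one : sig (1 : NCSPoly n) = 1 := by
  rw [MonoidAlgebra.one_def, sig_single, one_mul, FreeMonoid.toList_one, sigWordL_nil]

lemma sig_sub (f g : NCSPoly n) : sig (f - g) = sig f - sig g :=
  map_sub sigHom f g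

lemma ncStar_sub (f g : NCSPoly n) : ncStar (f - g) = ncStar f - ncStar g := by
  rw [sub_eq_add_neg, sub_eq_add_neg, ncStar_add]
  congr 1
  rw [eq_neg_iff_add_eq_zero, ← ncStar_add, neg_add_cancel, ncStar_zero]

lemma conj_ncConst (u : List (Fin n)) (N : ℝ) :
    conjHom u (ncConst N) = C N * sigWordL (u ++ u.reverse) := by
  rw [conjHom_apply, ncConst, iotaS, Wl, Wl, MonoidAlgebra.single_mul_single,
    MonoidAlgebra.single_mul_single, mul_one, one_mul, mul_one, ← FreeMonoid.ofList_append,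
    sig_single, FreeMonoid.toList_ofList]

lemma ncX_eq (j : Fin n) : ncX j = Wl [j] := rfl

lemma conj_sq (u : List (Fin n)) (j : Fin n) :
    conjHom u (ncX j ^ 2) = sigWordL ((u ++ [j]) ++ (u ++ [j]).reverse) := by
  rw [conjHom_apply, pow_two, ncX_eq, Wl_mul, Wl_mul, Wl_mul, sig_Wl]
  congr 1
  simp

lemma conj_term (u : List (Fin n)) (p c : NCSPoly n) :
    conjHom u (p * c * ncStar p) = sig ((Wl u * p) * c * ncStar (Wl u * p)) := by
  rw [conjHom_apply, ncStar_mul, ncStar_Wl]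
  simp only [mul_assoc]

lemma bound_word {Cs : Set (NCSPoly n)} (N : ℝ) (hN : 0 < N) (m : ℕ)
    (p c : Fin m → NCSPoly n) (hp : ∀ i, IsFreePoly (p i))
    (hc : ∀ i, c i = 1 ∨ (c i ∈ Cs ∧ IsFreePoly (c i)))
    (heq : ncConst N - ∑ j : Fin n, ncX j ^ 2 = ∑ i, p i * c i * ncStar (p i))
    (v : List (Fin n)) :
    C (N ^ v.length) - sigWordL (v ++ v.reverse) ∈ QM (Csig Cs) := by
  classical
  induction v using List.reverseRecOn with
  | nil => simpa [sigWordL_nil] using (QM_zero (S := Csig Cs))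
  | append_singleton q j IH =>
    -- the key identity obtained by conjugating the algebraic boundedness certificate
    have key := congrArg (conjHom (n := n) q) heq
    rw [map_sub, map_sum, map_sum, conj_ncConst] at key
    simp only [conj_sq] at key
    -- each term on the right-hand side lies in the quadratic module
    have hR : ∀ i, conjHom q (p i * c i * ncStar (p i)) ∈ QM (Csig Cs) := by
      intro i
      rw [conj_term]
      refine sig_conj_mem ((isFreePoly_Wl q).mul (hp i)) ?_
      rcases hc i with h | h
      · rw [h]; exact Set.mem_insert _ _
      · exact Set.mem_insert_of_mem _ h.1
    have hsum : ∑ i, conjHom q (p i * c i * ncStar (p i)) ∈ QM (Csig Cs) :=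
      QM_sum _ _ fun i _ => hR i
    have herase : ∑ j' ∈ Finset.univ.erase j,
        sigWordL ((q ++ [j']) ++ (q ++ [j']).reverse) ∈ QM (Csig Cs) :=
      QM_sum _ _ fun j' _ => sq_word_mem _
    have h5 : C N * sigWordL (q ++ q.reverse)
        - sigWordL ((q ++ [j]) ++ (q ++ [j]).reverse) ∈ QM (Csig Cs) := by
      have hmem := QM_add hsum herase
      have e2 := Finset.sum_erase_add Finset.univ
        (fun j' => sigWordL ((q ++ [j']) ++ (q ++ [j']).reverse)) (Finset.mem_univ j)
      rwa [show (∑ i, conjHom q (p i * c i * ncStar (p i)))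
          + ∑ j' ∈ Finset.univ.erase j, sigWordL ((q ++ [j']) ++ (q ++ [j']).reverse)
          = C N * sigWordL (q ++ q.reverse)
            - sigWordL ((q ++ [j]) ++ (q ++ [j]).reverse) by
        linear_combination -key + e2] at hmem
    have hfin := QM_add (QM_smul hN.le IH) h5
    rwa [show C N * (C (N ^ q.length) - sigWordL (q ++ q.reverse))
        + (C N * sigWordL (q ++ q.reverse) - sigWordL ((q ++ [j]) ++ (q ++ [j]).reverse))
        = C (N ^ (q ++ [j]).length) - sigWordL ((q ++ [j]) ++ (q ++ [j]).reverse) by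
      rw [show (q ++ [j]).length = q.length + 1 by simp, pow_succ, map_mul]; ring] at hfin

lemma gen_bound (Cs : Set (NCSPoly n)) (hab : AlgBounded Cs) (qv : SW n) :
    (X qv : SPoly n) ∈ Bnd (Csig Cs) := by
  obtain ⟨N, hN, m, p, c, hp, hc, heq⟩ := hab
  induction qv using Quotient.ind with
  | _ a =>
  obtain ⟨l, hl⟩ := a
  have hX : sigWordL l = (X (Quotient.mk (wordSetoid n) ⟨l, hl⟩) : SPoly n) := dif_neg hl
  have hbd := bound_word N hN m p c hp hc heq l
  -- lower bound certificate
  have h0 := sig_conj_mem (p := 1 + Wl l) (isFreePoly_one.add (isFreePoly_Wl l))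
    (Set.mem_insert 1 Cs)
  have e0 : sig ((1 + Wl l) * 1 * ncStar (1 + Wl l))
      = 1 + sigWordL l + sigWordL l + sigWordL (l ++ l.reverse) := by
    simp only [mul_one, ncStar_add, ncStar_one, ncStar_Wl, mul_add, add_mul, one_mul, Wl_mul,
      sig_add, sig_one, sig_Wl, sigWordL_reverse]
    ring
  rw [e0] at h0
  -- upper bound certificate
  have h1 := sig_conj_mem (p := 1 - Wl l) (isFreePoly_one.sub (isFreePoly_Wl l))
    (Set.mem_insert 1 Cs)
  have e1 : sig ((1 - Wl l) * 1 * ncStar (1 - Wl l))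
      = 1 - sigWordL l - sigWordL l + sigWordL (l ++ l.reverse) := by
    simp only [mul_one, ncStar_sub, ncStar_one, ncStar_Wl, mul_sub, sub_mul, one_mul, Wl_mul,
      sig_sub, sig_one, sig_Wl, sigWordL_reverse]
    ring
  rw [e1] at h1
  have hg : sigWordL l + sigWordL l ∈ Bnd (Csig Cs) := by
    refine ⟨1 + N ^ l.length, by positivity, ?_, ?_⟩
    · have := QM_add hbd h0
      rwa [show C (N ^ l.length) - sigWordL (l ++ l.reverse)
          + (1 + sigWordL l + sigWordL l + sigWordL (l ++ l.reverse))
          = C (1 + N ^ l.length) + (sigWordL l + sigWordL l) by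
        rw [map_add, C_1]; ring] at this
    · have := QM_add hbd h1
      rwa [show C (N ^ l.length) - sigWordL (l ++ l.reverse)
          + (1 - sigWordL l - sigWordL l + sigWordL (l ++ l.reverse))
          = C (1 + N ^ l.length) - (sigWordL l + sigWordL l) by
        rw [map_add, C_1]; ring] at this
  have hhalf : (C (1 / 2 : ℝ) : SPoly n) * (sigWordL l + sigWordL l) = sigWordL l := by
    rw [mul_add, ← add_mul, ← map_add]
    norm_num
  rw [← hX, ← hhalf]
  exact Bnd_Cmul _ hg

end Arch3

end StatePoly

namespace StatePoly

/-- Lemma `l:arch`.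
If `C ⊆ 𝐒` is balanced and algebraically bounded, then the quadratic module
`QM(C^ς) ⊆ 𝒮` is archimedean: for every `f ∈ 𝒮` there is `m > 0` with
`m + f ∈ QM(C^ς)` and `m − f ∈ QM(C^ς)`. -/
theorem statement_7 (n : ℕ) (hn : 1 ≤ n) (C : Set (NCSPoly n))
    (hbal : Balanced C) (hab : AlgBounded C) (f : SPoly n) :
    ∃ m : ℝ, 0 < m ∧ MvPolynomial.C m + f ∈ QM (Csig C) ∧
      MvPolynomial.C m - f ∈ QM (Csig C) := by
  have hf : f ∈ Bnd (Csig C) :=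
    MvPolynomial.induction_on f (fun a => Bnd_const a) (fun p q hp hq => Bnd_add hp hq)
      (fun p i hp => Bnd_mul hp (gen_bound C hab i))
  exact hf

end StatePoly
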